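/- arXiv:1305.5227 — 2 statements merged into one kernel-verified Lean document; each statement's English description precedes it below -/
import Mathlib

section
/- g(K³_n; q) ≤ r(K³_n; 2q), where g(K³_n; q) is the least N such that every q-coloring of the triples of any N points in general position in the plane yields n points in convex position whose triples are monochromatic, and r(K³_n; 2q) is the 2q-color Ramsey number for 3-uniform hypergraphs. -/
/-- A finite planar point set is in general position if no three of its points are collinear. -/
def GenPos (S : Finset (ℝ × ℝ)) : Prop :=
  ∀ T ⊆ S, T.card = 3 → ¬ Collinear ℝ (T : Set (ℝ × ℝ))

/-- A finite planar point set is in convex position if no point lies in the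
convex hull of the others. -/
def ConvexPos (S : Finset (ℝ × ℝ)) : Prop :=
  ∀ p ∈ S, p ∉ convexHull ℝ ((S.erase p : Finset (ℝ × ℝ)) : Set (ℝ × ℝ))

/-- `HyperRamseyProp ℓ n m N` : every `m`-coloring of the `ℓ`-subsets of an `N`-element
set yields an `n`-element subset all of whose `ℓ`-subsets get the same color; i.e.
`r(K^ℓ_n; m) ≤ N`. -/
def HyperRamseyProp (ℓ n m N : ℕ) : Prop :=
  ∀ χ : Finset (Fin N) → Fin m,
    ∃ T : Finset (Fin N), T.card = n ∧ ∃ c : Fin m, ∀ e ⊆ T, e.card = ℓ → χ e = c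

/-- `GeomRamseyProp ℓ n q N` : every set of at least `N` points in general position in the
plane, with any `q`-coloring of its `ℓ`-subsets, contains `n` points in convex position
all of whose `ℓ`-subsets receive the same color; i.e. `g(K^ℓ_n; q) ≤ N`. -/
def GeomRamseyProp (ℓ n q N : ℕ) : Prop :=
  ∀ V : Finset (ℝ × ℝ), N ≤ V.card → GenPos V →
    ∀ χ : Finset (ℝ × ℝ) → Fin q,
      ∃ T ⊆ V, T.card = n ∧ ConvexPos T ∧
        ∃ c : Fin q, ∀ e ⊆ T, e.card = ℓ → χ e = c

namespace GeomAux

def det3 (a b c : ℝ × ℝ) : ℝ :=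
  (b.1 - a.1) * (c.2 - a.2) - (b.2 - a.2) * (c.1 - a.1)

lemma det3_cycle (a b c : ℝ × ℝ) : det3 a b c = det3 b c a := by unfold det3; ring

lemma det3_swap23 (a b c : ℝ × ℝ) : det3 a b c = - det3 a c b := by unfold det3; ring

lemma collinear_of_det3_eq_zero {a b c : ℝ × ℝ} (h : det3 a b c = 0) :
    Collinear ℝ ({a, b, c} : Set (ℝ × ℝ)) := by
  by_cases hab : a = b
  · subst hab
    have : ({a, a, c} : Set (ℝ × ℝ)) = {a, c} := by simp
    rw [this]
    exact collinear_pair ℝ a c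
  · rw [collinear_iff_of_mem (Set.mem_insert a _)]
    refine ⟨b - a, ?_⟩
    intro p hp
    rcases hp with rfl | rfl | rfl
    · exact ⟨0, by simp⟩
    · exact ⟨1, by simp⟩
    · unfold det3 at h
      by_cases h1 : b.1 - a.1 = 0
      · have h2 : b.2 - a.2 ≠ 0 := by
          intro h2
          apply hab
          have e1 : a.1 = b.1 := by linarith
          have e2 : a.2 = b.2 := by linarith
          exact Prod.ext e1 e2
        refine ⟨(p.2 - a.2) / (b.2 - a.2), ?_⟩
        have hc1 : p.1 - a.1 = 0 := by
          have : (b.2 - a.2) * (p.1 - a.1) = 0 := by rw [h1] at h; linarith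
          rcases mul_eq_zero.mp this with h' | h'
          · exact absurd h' h2
          · exact h'
        apply Prod.ext
        · simp [Prod.fst_add, Prod.smul_fst, h1]
          linarith
        · simp [Prod.snd_add, Prod.smul_snd]
          field_simp
          ring
      · refine ⟨(p.1 - a.1) / (b.1 - a.1), ?_⟩
        apply Prod.ext
        · simp [Prod.fst_add, Prod.smul_fst]
          field_simp
          ring
        · simp [Prod.snd_add, Prod.smul_snd]
          field_simp
          nlinarith [h]

lemma det3_ne_zero {V : Finset (ℝ × ℝ)} (hV : GenPos V) {a b c : ℝ × ℝ}
    (ha : a ∈ V) (hb : b ∈ V) (hc : c ∈ V)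
    (hab : a ≠ b) (hac : a ≠ c) (hbc : b ≠ c) : det3 a b c ≠ 0 := by
  intro h0
  refine hV {a, b, c} ?_ ?_ ?_
  · intro x hx
    simp only [Finset.mem_insert, Finset.mem_singleton] at hx
    rcases hx with rfl | rfl | rfl <;> assumption
  · exact Finset.card_eq_three.mpr ⟨a, b, c, hab, hac, hbc, rfl⟩
  · have : (({a, b, c} : Finset (ℝ × ℝ)) : Set (ℝ × ℝ)) = {a, b, c} := by simp
    rw [this]
    exact collinear_of_det3_eq_zero h0

lemma det3_comb_ab {a b c p : ℝ × ℝ} {α β γ : ℝ} (hs : α + β + γ = 1)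
    (hp : p = α • a + β • b + γ • c) : det3 a b p = γ * det3 a b c := by
  have hγ : γ = 1 - α - β := by linarith
  subst hp hγ
  unfold det3
  simp [Prod.fst_add, Prod.snd_add, Prod.smul_fst, Prod.smul_snd, smul_eq_mul]
  ring

lemma det3_comb_bc {a b c p : ℝ × ℝ} {α β γ : ℝ} (hs : α + β + γ = 1)
    (hp : p = α • a + β • b + γ • c) : det3 b c p = α * det3 a b c := by
  have hγ : γ = 1 - α - β := by linarith
  subst hp hγ
  unfold det3
  simp [Prod.fst_add, Prod.snd_add, Prod.smul_fst, Prod.smul_snd, smul_eq_mul]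
  ring

lemma det3_comb_ac {a b c p : ℝ × ℝ} {α β γ : ℝ} (hs : α + β + γ = 1)
    (hp : p = α • a + β • b + γ • c) : det3 a c p = -(β * det3 a b c) := by
  have hγ : γ = 1 - α - β := by linarith
  subst hp hγ
  unfold det3
  simp [Prod.fst_add, Prod.snd_add, Prod.smul_fst, Prod.smul_snd, smul_eq_mul]
  ring

lemma det3_seg {a b p : ℝ × ℝ} {α β : ℝ} (hs : α + β = 1)
    (hp : p = α • a + β • b) : det3 a b p = 0 := by
  have hβ : β = 1 - α := by linarith
  subst hp hβ
  unfold det3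
  simp [Prod.fst_add, Prod.snd_add, Prod.smul_fst, Prod.smul_snd, smul_eq_mul]
  ring

lemma exists_sorted3 {α : Type*} [LinearOrder α] [DecidableEq α] {s : Finset α} (h : s.card = 3) :
    ∃ i j k, i < j ∧ j < k ∧ s = {i, j, k} := by
  obtain ⟨a, b, c, hab, hac, hbc, rfl⟩ := Finset.card_eq_three.mp h
  rcases hab.lt_or_gt with h1 | h1 <;> rcases hac.lt_or_gt with h2 | h2 <;>
    rcases hbc.lt_or_gt with h3 | h3
  · exact ⟨a, b, c, h1, h3, rfl⟩
  · exact ⟨a, c, b, h2, h3, by ext x; simp only [Finset.mem_insert, Finset.mem_singleton]; tauto⟩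
  · exact absurd (h2.trans h1) (lt_asymm h3)
  · exact ⟨c, a, b, h2, h1, by ext x; simp only [Finset.mem_insert, Finset.mem_singleton]; tauto⟩
  · exact ⟨b, a, c, h1, h2, by ext x; simp only [Finset.mem_insert, Finset.mem_singleton]; tauto⟩
  · exact absurd (h2.trans h3) (lt_asymm h1)
  · exact ⟨b, c, a, h3, h2, by ext x; simp only [Finset.mem_insert, Finset.mem_singleton]; tauto⟩
  · exact ⟨c, b, a, h3, h1, by ext x; simp only [Finset.mem_insert, Finset.mem_singleton]; tauto⟩

lemma min3_eq {α : Type*} [LinearOrder α] [DecidableEq α] {x y z : α} (hxy : x < y) (hyz : y < z) :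
    ({x, y, z} : Finset α).min = (x : WithTop α) := by
  apply le_antisymm
  · exact Finset.min_le (by simp)
  · apply Finset.le_min
    intro b hb
    simp only [Finset.mem_insert, Finset.mem_singleton] at hb
    rcases hb with rfl | rfl | rfl
    · exact le_refl _
    · exact_mod_cast hxy.le
    · exact_mod_cast (hxy.trans hyz).le

lemma max3_eq {α : Type*} [LinearOrder α] [DecidableEq α] {x y z : α} (hxy : x < y) (hyz : y < z) :
    ({x, y, z} : Finset α).max = (z : WithBot α) := by
  apply le_antisymm
  · apply Finset.max_le
    intro b hb
    simp only [Finset.mem_insert, Finset.mem_singleton] at hb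
    rcases hb with rfl | rfl | rfl
    · exact_mod_cast (hxy.trans hyz).le
    · exact_mod_cast hyz.le
    · exact le_refl _
  · exact Finset.le_max (by simp)

lemma sorted3_inj {α : Type*} [LinearOrder α] [DecidableEq α] {i j k i' j' k' : α}
    (h1 : i < j) (h2 : j < k) (h1' : i' < j') (h2' : j' < k')
    (hs : ({i, j, k} : Finset α) = {i', j', k'}) : i = i' ∧ j = j' ∧ k = k' := by
  have e1 : (i : WithTop α) = (i' : WithTop α) := by
    rw [← min3_eq h1 h2, ← min3_eq h1' h2', hs]
  have f1 : (k : WithBot α) = (k' : WithBot α) := by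
    rw [← max3_eq h1 h2, ← max3_eq h1' h2', hs]
  have hii' : i = i' := WithTop.coe_injective e1
  have hkk' : k = k' := WithBot.coe_injective f1
  refine ⟨hii', ?_, hkk'⟩
  have hj : j ∈ ({i', j', k'} : Finset α) := by rw [← hs]; simp
  simp only [Finset.mem_insert, Finset.mem_singleton] at hj
  rcases hj with rfl | rfl | rfl
  · exact absurd hii' (ne_of_lt h1)
  · rfl
  · exact absurd hkk'.symm (ne_of_lt h2)

end GeomAux

open GeomAux Classical in
/-- `g(K³_n; q) ≤ r(K³_n; 2q)`: any `N` realizing the `2q`-color hypergraph Ramsey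
property for triples also realizes the geometric monochromatic-convex property. -/
theorem geom_le_hyper_ramsey_triples (n q N : ℕ)
    (h : HyperRamseyProp 3 n (2 * q) N) :
    GeomRamseyProp 3 n q N := by
  intro V hNV hgen χ
  rcases Nat.eq_zero_or_pos q with rfl | hq
  · exact (χ ∅).elim0
  obtain ⟨U, hUV, hUcard⟩ := Finset.exists_subset_card_eq hNV
  set e : Fin N ≃ {x // x ∈ U} := ((U.equivFin).trans (finCongr hUcard)).symm with he
  set f : Fin N → ℝ × ℝ := fun i => (e i : ℝ × ℝ) with hf
  have hfinj : Function.Injective f := fun i j hij => e.injective (Subtype.ext hij)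
  have hfV : ∀ i, f i ∈ V := fun i => hUV (e i).2
  have hfne : ∀ {i j : Fin N}, i ≠ j → f i ≠ f j := fun hij hf' => hij (hfinj hf')
  have hD : ∀ i j k : Fin N, i ≠ j → i ≠ k → j ≠ k →
      det3 (f i) (f j) (f k) ≠ 0 := fun i j k hij hik hjk =>
    det3_ne_zero hgen (hfV i) (hfV j) (hfV k) (hfne hij) (hfne hik) (hfne hjk)
  obtain ⟨T', hT'card, c, hc⟩ := h (fun s =>
    if s.card = 3 then
      finProdFinEquiv
        ((if (∃ i j k : Fin N, i < j ∧ j < k ∧ s = {i, j, k} ∧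
            0 < det3 (f i) (f j) (f k)) then 1 else 0 : Fin 2),
          χ (s.image f))
    else ⟨0, by omega⟩)
  set b₀ : Fin 2 := (finProdFinEquiv.symm c).1 with hb₀
  set c₀ : Fin q := (finProdFinEquiv.symm c).2 with hc₀
  have hcpair : finProdFinEquiv ((b₀, c₀) : Fin 2 × Fin q) = c := by
    rw [hb₀, hc₀]
    exact finProdFinEquiv.apply_symm_apply c
  have key : ∀ s ⊆ T', s.card = 3 →
      ((if (∃ i j k : Fin N, i < j ∧ j < k ∧ s = {i, j, k} ∧
          0 < det3 (f i) (f j) (f k)) then 1 else 0 : Fin 2) = b₀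
        ∧ χ (s.image f) = c₀) := by
    intro s hsT h3
    have hcs := hc s hsT h3
    simp only [h3, if_true, reduceIte] at hcs
    rw [← hcpair] at hcs
    have h2 := finProdFinEquiv.injective hcs
    exact ⟨congrArg Prod.fst h2, congrArg Prod.snd h2⟩
  have sign : ∀ i j k : Fin N, i ∈ T' → j ∈ T' → k ∈ T' → i < j → j < k →
      (0 < det3 (f i) (f j) (f k) ↔ b₀ = 1) := by
    intro i j k hi hj hk hij hjk
    have hsub : ({i, j, k} : Finset (Fin N)) ⊆ T' := by
      intro x hx
      simp only [Finset.mem_insert, Finset.mem_singleton] at hx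
      rcases hx with rfl | rfl | rfl <;> assumption
    have h3 : ({i, j, k} : Finset (Fin N)).card = 3 :=
      Finset.card_eq_three.mpr ⟨i, j, k, ne_of_lt hij, ne_of_lt (hij.trans hjk), ne_of_lt hjk, rfl⟩
    have hkey := (key _ hsub h3).1
    have hPiff : (∃ i' j' k' : Fin N, i' < j' ∧ j' < k' ∧
        ({i, j, k} : Finset (Fin N)) = {i', j', k'} ∧
        0 < det3 (f i') (f j') (f k')) ↔ 0 < det3 (f i) (f j) (f k) := by
      constructor
      · rintro ⟨i', j', k', h1', h2', hset, hpos⟩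
        obtain ⟨rfl, rfl, rfl⟩ := sorted3_inj hij hjk h1' h2' hset
        exact hpos
      · intro hpos
        exact ⟨i, j, k, hij, hjk, rfl, hpos⟩
    simp only [hPiff] at hkey
    constructor
    · intro hpos
      rw [if_pos hpos] at hkey
      exact hkey.symm
    · intro hb1
      by_contra hneg
      rw [if_neg hneg, hb1] at hkey
      exact absurd hkey (by decide)
  set sg : ℝ := if b₀ = 1 then 1 else -1 with hsg
  have spos : ∀ i j k : Fin N, i ∈ T' → j ∈ T' → k ∈ T' → i < j → j < k →
      0 < sg * det3 (f i) (f j) (f k) := by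
    intro i j k hi hj hk hij hjk
    have hne := hD i j k (ne_of_lt hij) (ne_of_lt (hij.trans hjk)) (ne_of_lt hjk)
    by_cases hb : b₀ = 1
    · have hpos := (sign i j k hi hj hk hij hjk).mpr hb
      rw [hsg, if_pos hb]
      linarith
    · have hnot : ¬ 0 < det3 (f i) (f j) (f k) :=
        fun hp => hb ((sign i j k hi hj hk hij hjk).mp hp)
      have hlt : det3 (f i) (f j) (f k) < 0 := lt_of_le_of_ne (not_lt.mp hnot) hne
      rw [hsg, if_neg hb]
      linarith
  refine ⟨T'.image f, ?_, ?_, ?_, c₀, ?_⟩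
  · intro x hx
    obtain ⟨i, hi, rfl⟩ := Finset.mem_image.mp hx
    exact hfV i
  · rw [Finset.card_image_of_injective _ hfinj, hT'card]
  · -- Convex position (Tarsi's lemma)
    intro p hp hmem
    obtain ⟨l, hl, rfl⟩ := Finset.mem_image.mp hp
    rw [← Finset.image_erase hfinj] at hmem
    rw [convexHull_eq_union] at hmem
    simp only [Set.mem_iUnion] at hmem
    obtain ⟨t, hts, hai, hpt⟩ := hmem
    have htsub : t ⊆ (T'.erase l).image f := Finset.coe_subset.mp hts
    have hcardt : t.card ≤ 3 := by
      have h1 := hai.card_le_finrank_succ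
      rw [Fintype.card_coe] at h1
      have h2 := Submodule.finrank_le (vectorSpan ℝ (Set.range ((↑) : t → ℝ × ℝ)))
      have h3 : Module.finrank ℝ (ℝ × ℝ) = 2 := by
        rw [Module.finrank_prod, Module.finrank_self]
      omega
    obtain ⟨u, husub, rfl⟩ := Finset.subset_image_iff.mp htsub
    have hucard3 : u.card ≤ 3 := by
      rw [← Finset.card_image_of_injective u hfinj]
      exact hcardt
    have hmemT' : ∀ m ∈ u, m ∈ T' := fun m hm => Finset.mem_of_mem_erase (husub hm)
    have hneql : ∀ m ∈ u, m ≠ l := fun m hm => Finset.ne_of_mem_erase (husub hm)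
    have hcases : u.card = 0 ∨ u.card = 1 ∨ u.card = 2 ∨ u.card = 3 := by omega
    rcases hcases with h0 | h1 | h2 | h3
    · rw [Finset.card_eq_zero.mp h0] at hpt
      simp at hpt
    · obtain ⟨m, rfl⟩ := Finset.card_eq_one.mp h1
      simp only [Finset.image_singleton, Finset.coe_singleton, convexHull_singleton,
        Set.mem_singleton_iff] at hpt
      exact hneql m (Finset.mem_singleton_self m) (hfinj hpt).symm
    · obtain ⟨m₁, m₂, hm12, rfl⟩ := Finset.card_eq_two.mp h2
      have hm1 : m₁ ∈ ({m₁, m₂} : Finset (Fin N)) := by simp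
      have hm2 : m₂ ∈ ({m₁, m₂} : Finset (Fin N)) := by simp
      rw [Finset.convexHull_eq] at hpt
      obtain ⟨w, hw0, hw1, hwp⟩ := hpt
      rw [Finset.centerMass_eq_of_sum_1 _ _ hw1] at hwp
      have himg : ({m₁, m₂} : Finset (Fin N)).image f = {f m₁, f m₂} := by
        simp [Finset.image_insert, Finset.image_singleton]
      rw [himg] at hwp hw1
      have hfne12 : f m₁ ≠ f m₂ := hfne hm12
      rw [Finset.sum_insert (by simpa using hfne12)] at hwp hw1
      simp only [Finset.sum_singleton, id] at hwp hw1
      have hz : det3 (f m₁) (f m₂) (f l) = 0 :=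
        det3_seg hw1 hwp.symm
      exact hD m₁ m₂ l hm12 (hneql m₁ hm1) (hneql m₂ hm2) hz
    · obtain ⟨i, j, k, hij, hjk, rfl⟩ := exists_sorted3 h3
      have hi : i ∈ ({i, j, k} : Finset (Fin N)) := by simp
      have hj : j ∈ ({i, j, k} : Finset (Fin N)) := by simp
      have hk : k ∈ ({i, j, k} : Finset (Fin N)) := by simp
      have hiT := hmemT' i hi
      have hjT := hmemT' j hj
      have hkT := hmemT' k hk
      have hil := hneql i hi
      have hjl := hneql j hj
      have hkl := hneql k hk
      rw [Finset.convexHull_eq] at hpt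
      obtain ⟨w, hw0, hw1, hwp⟩ := hpt
      rw [Finset.centerMass_eq_of_sum_1 _ _ hw1] at hwp
      have himg : ({i, j, k} : Finset (Fin N)).image f = {f i, f j, f k} := by
        simp [Finset.image_insert, Finset.image_singleton]
      rw [himg] at hwp hw1 hw0
      have hfij : f i ≠ f j := hfne (ne_of_lt hij)
      have hfik : f i ≠ f k := hfne (ne_of_lt (hij.trans hjk))
      have hfjk : f j ≠ f k := hfne (ne_of_lt hjk)
      rw [Finset.sum_insert (by simp [hfij, hfik]),
        Finset.sum_insert (by simpa using hfjk)] at hwp hw1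
      simp only [Finset.sum_singleton, id] at hwp hw1
      have hw1' : w (f i) + w (f j) + w (f k) = 1 := by linarith
      have hp' : f l = w (f i) • f i + w (f j) • f j + w (f k) • f k := by
        rw [← hwp]; abel
      have hW := spos i j k hiT hjT hkT hij hjk
      have hgab := det3_comb_ab hw1' hp'
      have hgbc := det3_comb_bc hw1' hp'
      have hgac := det3_comb_ac hw1' hp'
      have hγpos : 0 < w (f k) := by
        have hne := hD i j l (ne_of_lt hij) hil hjl
        rw [hgab] at hne
        have := hw0 (f k) (by simp)
        rcases this.lt_or_eq with h' | h'
        · exact h'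
        · exact absurd (by rw [← h']; ring) hne
      have hαpos : 0 < w (f i) := by
        have hne := hD j k l (ne_of_lt hjk) hjl hkl
        rw [hgbc] at hne
        have := hw0 (f i) (by simp)
        rcases this.lt_or_eq with h' | h'
        · exact h'
        · exact absurd (by rw [← h']; ring) hne
      have hβpos : 0 < w (f j) := by
        have hne := hD i k l (ne_of_lt (hij.trans hjk)) hil hkl
        rw [hgac] at hne
        have := hw0 (f j) (by simp)
        rcases this.lt_or_eq with h' | h'
        · exact h'
        · exact absurd (by rw [← h']; ring) hne
      rcases lt_trichotomy l i with hli | hli | hli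
      · have h1 := spos l i k hl hiT hkT hli (hij.trans hjk)
        rw [det3_cycle, hgac] at h1
        have heq : sg * -(w (f j) * det3 (f i) (f j) (f k)) =
            -(w (f j) * (sg * det3 (f i) (f j) (f k))) := by ring
        rw [heq] at h1
        linarith [mul_pos hβpos hW]
      · exact hil hli.symm
      · rcases lt_trichotomy l j with hlj | hlj | hlj
        · have h1 := spos i l j hiT hl hjT hli hlj
          rw [det3_swap23, hgab] at h1
          have heq : sg * -(w (f k) * det3 (f i) (f j) (f k)) =
              -(w (f k) * (sg * det3 (f i) (f j) (f k))) := by ring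
          rw [heq] at h1
          linarith [mul_pos hγpos hW]
        · exact hjl hlj.symm
        · rcases lt_trichotomy l k with hlk | hlk | hlk
          · have h1 := spos j l k hjT hl hkT hlj hlk
            rw [det3_swap23, hgbc] at h1
            have heq : sg * -(w (f i) * det3 (f i) (f j) (f k)) =
                -(w (f i) * (sg * det3 (f i) (f j) (f k))) := by ring
            rw [heq] at h1
            linarith [mul_pos hαpos hW]
          · exact hkl hlk.symm
          · have h1 := spos i k l hiT hkT hl (hij.trans hjk) hlk
            rw [hgac] at h1
            have heq : sg * -(w (f j) * det3 (f i) (f j) (f k)) =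
                -(w (f j) * (sg * det3 (f i) (f j) (f k))) := by ring
            rw [heq] at h1
            linarith [mul_pos hβpos hW]
  · intro e' he'T h3'
    obtain ⟨e'', he''sub, rfl⟩ := Finset.subset_image_iff.mp he'T
    have h3'' : e''.card = 3 := by
      rw [← Finset.card_image_of_injective e'' hfinj]
      exact h3'
    exact (key e'' he''sub h3'').2
end

section
/- For ℓ ≥ 4 and n ≥ 4^ℓ, g(K^ℓ_n; q) ≤ r(K^ℓ_n; q+1), where g(K^ℓ_n; q) is the least N such that every q-coloring of the ℓ-subsets of any N points in general position in the plane yields n points in convex position all of whose ℓ-subsets are monochromatic. -/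
open Finset

noncomputable section ESStuff

/-- Slope between two planar points. -/
def pslope (p q : ℝ × ℝ) : ℝ := (q.2 - p.2) / (q.1 - p.1)

lemma pslope_mul {p q : ℝ × ℝ} (h : p.1 ≠ q.1) :
    pslope p q * (q.1 - p.1) = q.2 - p.2 := by
  have : q.1 - p.1 ≠ 0 := sub_ne_zero.2 (Ne.symm h)
  unfold pslope
  field_simp

lemma pslope_identity {a b c : ℝ × ℝ} (h1 : a.1 < b.1) (h2 : b.1 < c.1) :
    pslope a c - pslope a b = ((c.1 - b.1) / (c.1 - a.1)) * (pslope b c - pslope a b) ∧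
    pslope b c - pslope a c = ((b.1 - a.1) / (c.1 - a.1)) * (pslope b c - pslope a b) := by
  have hab : b.1 - a.1 ≠ 0 := ne_of_gt (by linarith)
  have hbc : c.1 - b.1 ≠ 0 := ne_of_gt (by linarith)
  have hac : c.1 - a.1 ≠ 0 := ne_of_gt (by linarith)
  unfold pslope
  constructor <;> (field_simp; ring)

lemma mediant {a b c : ℝ × ℝ} (h1 : a.1 < b.1) (h2 : b.1 < c.1) {ε : ℝ}
    (h : ε * pslope a b < ε * pslope b c) :
    ε * pslope a b < ε * pslope a c ∧ ε * pslope a c < ε * pslope b c := by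
  obtain ⟨e1, e2⟩ := pslope_identity h1 h2
  have t1 : (0:ℝ) < (c.1 - b.1) / (c.1 - a.1) := div_pos (by linarith) (by linarith)
  have t2 : (0:ℝ) < (b.1 - a.1) / (c.1 - a.1) := div_pos (by linarith) (by linarith)
  have f1 : ε * pslope a c - ε * pslope a b
      = ((c.1 - b.1) / (c.1 - a.1)) * (ε * pslope b c - ε * pslope a b) := by
    linear_combination ε * e1
  have f2 : ε * pslope b c - ε * pslope a c
      = ((b.1 - a.1) / (c.1 - a.1)) * (ε * pslope b c - ε * pslope a b) := by
    linear_combination ε * e2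
  constructor
  · nlinarith [mul_pos t1 (sub_pos.2 h)]
  · nlinarith [mul_pos t2 (sub_pos.2 h)]

/-- A convex chain (cup if `ε = 1`, cap if `ε = -1`): points with pairwise distinct
`x`-coordinates such that along every `x`-ordered triple the (signed) slopes increase. -/
def IsChain2 (ε : ℝ) (P : Finset (ℝ × ℝ)) : Prop :=
  (∀ p ∈ P, ∀ q ∈ P, p ≠ q → p.1 ≠ q.1) ∧
  ∀ a ∈ P, ∀ b ∈ P, ∀ c ∈ P, a.1 < b.1 → b.1 < c.1 → ε * pslope a b < ε * pslope b c

lemma isChain2_of_card_le_two {ε : ℝ} {P : Finset (ℝ × ℝ)}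
    (hx : ∀ p ∈ P, ∀ q ∈ P, p ≠ q → p.1 ≠ q.1) (h2 : P.card ≤ 2) : IsChain2 ε P := by
  refine ⟨hx, fun a ha b hb c hc h1 h2' => absurd ?_ (by omega : ¬ 3 ≤ P.card)⟩
  have hab : a ≠ b := fun h => by rw [h] at h1; exact lt_irrefl _ h1
  have hbc : b ≠ c := fun h => by rw [h] at h2'; exact lt_irrefl _ h2'
  have hac : a ≠ c := fun h => by rw [h] at h1; exact absurd (h1.trans h2') (lt_irrefl _)
  calc 3 = ({a, b, c} : Finset (ℝ × ℝ)).card := by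
        rw [card_insert_of_notMem (by simp [hab, hac]), card_insert_of_notMem (by simp [hbc]),
          card_singleton]
    _ ≤ P.card := card_le_card (by
        intro x hx'
        simp only [mem_insert, mem_singleton] at hx'
        rcases hx' with rfl | rfl | rfl <;> assumption)

lemma chain_insert_max {ε : ℝ} {P : Finset (ℝ × ℝ)} (hP : IsChain2 ε P)
    {p q r : ℝ × ℝ} (hp : p ∈ P) (hpmax : ∀ x ∈ P, x.1 ≤ p.1)
    (hq : q ∈ P) (hq2 : ∀ x ∈ P, x ≠ p → x.1 ≤ q.1) (hqp : q.1 < p.1)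
    (hr : p.1 < r.1) (hext : ε * pslope q p < ε * pslope p r) :
    IsChain2 ε (insert r P) := by
  have key1 : ∀ a ∈ P, a.1 < p.1 → ε * pslope a p < ε * pslope p r := by
    intro a ha hap
    by_cases haq : a = q
    · subst haq; exact hext
    · have hanep : a ≠ p := fun h => by rw [h] at hap; exact lt_irrefl _ hap
      have haq1 : a.1 < q.1 := lt_of_le_of_ne (hq2 a ha hanep) (hP.1 a ha q hq haq)
      have h3 := hP.2 a ha q hq p hp haq1 hqp
      have h4 := (mediant haq1 hqp h3).2
      linarith
  have key2 : ∀ a ∈ P, ∀ b ∈ P, a.1 < b.1 → ε * pslope a b < ε * pslope b r := by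
    intro a ha b hb hab
    by_cases hbp : b = p
    · subst hbp; exact key1 a ha hab
    · have hbp1 : b.1 < p.1 := lt_of_le_of_ne (hpmax b hb) (hP.1 b hb p hp hbp)
      have h4 := hP.2 a ha b hb p hp hab hbp1
      have h5 := key1 b hb hbp1
      have h6 := (mediant hbp1 hr h5).1
      linarith
  have hmem : ∀ x ∈ insert r P, x ≠ r → x ∈ P ∧ x.1 < r.1 := by
    intro x hx hxr
    have hxP : x ∈ P := by rcases mem_insert.1 hx with h | h; exact absurd h hxr; exact h
    exact ⟨hxP, lt_of_le_of_lt (hpmax x hxP) hr⟩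
  constructor
  · intro x hx y hy hxy
    by_cases hxr : x = r
    · subst hxr
      have := hmem y hy (Ne.symm hxy)
      exact (ne_of_lt this.2).symm
    · by_cases hyr : y = r
      · subst hyr; exact ne_of_lt (hmem x hx hxr).2
      · exact hP.1 x (hmem x hx hxr).1 y (hmem y hy hyr).1 hxy
  · intro a ha b hb c hc h1 h2
    by_cases hcr : c = r
    · have hbP : b ∈ P := by
        refine (hmem b hb ?_).1
        intro h; rw [h, hcr] at h2; exact lt_irrefl _ h2
      have haP : a ∈ P := by
        refine (hmem a ha ?_).1
        intro h
        have : b.1 < r.1 := hcr ▸ h2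
        have hbr : b.1 ≤ p.1 := hpmax b hbP
        rw [h] at h1; linarith
      rw [hcr]
      exact key2 a haP b hbP h1
    · have hcP := hmem c hc hcr
      have hbP : b ∈ P := by
        refine (hmem b hb ?_).1
        intro h; subst h; linarith [hcP.2]
      have haP : a ∈ P := by
        refine (hmem a ha ?_).1
        intro h; subst h
        linarith [(hmem b hb (by intro h'; subst h'; exact lt_irrefl _ h1)).2]
      exact hP.2 a haP b hbP c hcP.1 h1 h2

lemma chain_insert_min {ε : ℝ} {Q : Finset (ℝ × ℝ)} (hQ : IsChain2 ε Q)
    {p r w : ℝ × ℝ} (hp : p ∈ Q) (hpmin : ∀ x ∈ Q, p.1 ≤ x.1)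
    (hr : r ∈ Q) (hr2 : ∀ x ∈ Q, x ≠ p → r.1 ≤ x.1) (hpr : p.1 < r.1)
    (hw : w.1 < p.1) (hext : ε * pslope w p < ε * pslope p r) :
    IsChain2 ε (insert w Q) := by
  have key1 : ∀ c ∈ Q, p.1 < c.1 → ε * pslope w p < ε * pslope p c := by
    intro c hc hpc
    by_cases hcr : c = r
    · subst hcr; exact hext
    · have hcnep : c ≠ p := fun h => by rw [h] at hpc; exact lt_irrefl _ hpc
      have hrc : r.1 < c.1 := lt_of_le_of_ne (hr2 c hc hcnep) (hQ.1 r hr c hc (Ne.symm hcr))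
      have h3 := hQ.2 p hp r hr c hc hpr hrc
      have h4 := (mediant hpr hrc h3).1
      linarith
  have key2 : ∀ b ∈ Q, ∀ c ∈ Q, b.1 < c.1 → ε * pslope w b < ε * pslope b c := by
    intro b hb c hc hbc
    by_cases hbp : b = p
    · subst hbp; exact key1 c hc hbc
    · have hpb : p.1 < b.1 := lt_of_le_of_ne (hpmin b hb) (Ne.symm (hQ.1 b hb p hp hbp))
      have h4 := hQ.2 p hp b hb c hc hpb hbc
      have h5 := key1 b hb hpb
      have h6 := (mediant hw hpb h5).2
      linarith
  have hmem : ∀ x ∈ insert w Q, x ≠ w → x ∈ Q ∧ w.1 < x.1 := by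
    intro x hx hxw
    have hxQ : x ∈ Q := by rcases mem_insert.1 hx with h | h; exact absurd h hxw; exact h
    exact ⟨hxQ, lt_of_lt_of_le hw (hpmin x hxQ)⟩
  constructor
  · intro x hx y hy hxy
    by_cases hxw : x = w
    · subst hxw; exact ne_of_lt (hmem y hy (Ne.symm hxy)).2
    · by_cases hyw : y = w
      · subst hyw; exact (ne_of_lt (hmem x hx hxw).2).symm
      · exact hQ.1 x (hmem x hx hxw).1 y (hmem y hy hyw).1 hxy
  · intro a ha b hb c hc h1 h2
    by_cases haw : a = w
    · have hbQ : b ∈ Q := by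
        refine (hmem b hb ?_).1
        intro h; rw [h, haw] at h1; exact lt_irrefl _ h1
      have hcQ : c ∈ Q := by
        refine (hmem c hc ?_).1
        intro h
        have : w.1 < b.1 := haw ▸ h1
        have := hpmin b hbQ
        rw [h] at h2; linarith
      rw [haw]
      exact key2 b hbQ c hcQ h2
    · have haQ := hmem a ha haw
      have hbQ : b ∈ Q := by
        refine (hmem b hb ?_).1
        intro h; subst h; linarith [haQ.2]
      have hcQ : c ∈ Q := by
        refine (hmem c hc ?_).1
        intro h; subst h; linarith [haQ.2]
      exact hQ.2 a haQ.1 b hbQ c hcQ h1 h2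

lemma exists_second_max {P : Finset (ℝ × ℝ)}
    (hxP : ∀ p ∈ P, ∀ q ∈ P, p ≠ q → p.1 ≠ q.1) {p : ℝ × ℝ} (hp : p ∈ P)
    (h2 : 2 ≤ P.card) (hpmax : ∀ x ∈ P, x.1 ≤ p.1) :
    ∃ q ∈ P, q ≠ p ∧ q.1 < p.1 ∧ ∀ x ∈ P, x ≠ p → x.1 ≤ q.1 := by
  have hne : (P.erase p).Nonempty := by
    rw [← card_pos, card_erase_of_mem hp]; omega
  obtain ⟨q, hq, hqmax⟩ := (P.erase p).exists_max_image (·.1) hne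
  have hqP : q ∈ P := mem_of_mem_erase hq
  have hqp : q ≠ p := ne_of_mem_erase hq
  exact ⟨q, hqP, hqp, lt_of_le_of_ne (hpmax q hqP) (hxP q hqP p hp hqp),
    fun x hx hxp => hqmax x (mem_erase.2 ⟨hxp, hx⟩)⟩

lemma exists_second_min {P : Finset (ℝ × ℝ)}
    (hxP : ∀ p ∈ P, ∀ q ∈ P, p ≠ q → p.1 ≠ q.1) {p : ℝ × ℝ} (hp : p ∈ P)
    (h2 : 2 ≤ P.card) (hpmin : ∀ x ∈ P, p.1 ≤ x.1) :
    ∃ q ∈ P, q ≠ p ∧ p.1 < q.1 ∧ ∀ x ∈ P, x ≠ p → q.1 ≤ x.1 := by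
  have hne : (P.erase p).Nonempty := by
    rw [← card_pos, card_erase_of_mem hp]; omega
  obtain ⟨q, hq, hqmin⟩ := (P.erase p).exists_min_image (·.1) hne
  have hqP : q ∈ P := mem_of_mem_erase hq
  have hqp : q ≠ p := ne_of_mem_erase hq
  exact ⟨q, hqP, hqp, lt_of_le_of_ne (hpmin q hqP) (hxP p hp q hqP (Ne.symm hqp)),
    fun x hx hxp => hqmin x (mem_erase.2 ⟨hxp, hx⟩)⟩

end ESStuff

section ESStuff2

open scoped Classical

/-- The cups-and-caps Erdős–Szekeres theorem. -/
lemma cupcap : ∀ (k a b : ℕ), a + b ≤ k → 2 ≤ a → 2 ≤ b →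
    ∀ S : Finset (ℝ × ℝ),
    (∀ p ∈ S, ∀ q ∈ S, p ≠ q → p.1 ≠ q.1) →
    (∀ x ∈ S, ∀ y ∈ S, ∀ z ∈ S, x.1 < y.1 → y.1 < z.1 → pslope x y ≠ pslope y z) →
    Nat.choose (a + b - 4) (a - 2) < S.card →
    (∃ P ⊆ S, P.card = a ∧ IsChain2 1 P) ∨ (∃ P ⊆ S, P.card = b ∧ IsChain2 (-1) P) := by
  intro k
  induction k with
  | zero => intro a b h ha _ _ _ _ _; omega
  | succ k ih =>
    intro a b hk ha hb S hx hs hcard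
    by_cases ha2 : a = 2
    · left
      have : 2 ≤ S.card := by
        subst ha2; simp at hcard; omega
      obtain ⟨P, hPS, hPc⟩ := Finset.exists_subset_card_eq this
      exact ⟨P, hPS, by omega,
        isChain2_of_card_le_two (fun p hp q hq => hx p (hPS hp) q (hPS hq)) (by omega)⟩
    by_cases hb2 : b = 2
    · right
      have : 2 ≤ S.card := by
        subst hb2
        have : Nat.choose (a + 2 - 4) (a - 2) = 1 := by
          have : a + 2 - 4 = a - 2 := by omega
          rw [this, Nat.choose_self]
        omega
      obtain ⟨P, hPS, hPc⟩ := Finset.exists_subset_card_eq this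
      exact ⟨P, hPS, by omega,
        isChain2_of_card_le_two (fun p hp q hq => hx p (hPS hp) q (hPS hq)) (by omega)⟩
    have ha3 : 3 ≤ a := by omega
    have hb3 : 3 ≤ b := by omega
    set E := S.filter
      (fun p => ∃ P ⊆ S, P.card = a - 1 ∧ IsChain2 1 P ∧ p ∈ P ∧ ∀ x ∈ P, x.1 ≤ p.1) with hE
    have hES : E ⊆ S := filter_subset _ _
    by_cases hcase : Nat.choose (a + b - 5) (a - 3) < (S \ E).card
    · have hsub : S \ E ⊆ S := sdiff_subset
      have hrec := ih (a - 1) b (by omega) (by omega) hb (S \ E)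
        (fun p hp q hq => hx p (hsub hp) q (hsub hq))
        (fun x hx' y hy z hz => hs x (hsub hx') y (hsub hy) z (hsub hz))
        (by
          have e1 : a - 1 + b - 4 = a + b - 5 := by omega
          have e2 : a - 1 - 2 = a - 3 := by omega
          rw [e1, e2]; exact hcase)
      rcases hrec with ⟨P, hPs, hPc, hPch⟩ | ⟨P, hPs, hPc, hPch⟩
      · exfalso
        have hPne : P.Nonempty := by rw [← card_pos]; omega
        obtain ⟨p, hp, hpmax⟩ := P.exists_max_image (·.1) hPne
        have hpE : p ∈ E := by
          rw [hE, mem_filter]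
          exact ⟨hsub (hPs hp), P, hPs.trans hsub, hPc, hPch, hp, hpmax⟩
        exact (mem_sdiff.1 (hPs hp)).2 hpE
      · exact Or.inr ⟨P, hPs.trans hsub, hPc, hPch⟩
    · have hcardE : Nat.choose (a + b - 5) (a - 2) < E.card := by
        have h1 := Finset.card_sdiff_add_card_eq_card hES
        have h2 : Nat.choose (a + b - 4) (a - 2)
            = Nat.choose (a + b - 5) (a - 3) + Nat.choose (a + b - 5) (a - 2) := by
          have e3 : a + b - 4 = (a + b - 5) + 1 := by omega
          have e4 : a - 2 = (a - 3) + 1 := by omega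
          rw [e3, e4, Nat.choose_succ_succ]
        omega
      have hrec := ih a (b - 1) (by omega) ha (by omega) E
        (fun p hp q hq => hx p (hES hp) q (hES hq))
        (fun x hx' y hy z hz => hs x (hES hx') y (hES hy) z (hES hz))
        (by
          have e1 : a + (b - 1) - 4 = a + b - 5 := by omega
          rw [e1]; exact hcardE)
      rcases hrec with ⟨P, hPs, hPc, hPch⟩ | ⟨Q, hQE, hQc, hQch⟩
      · exact Or.inl ⟨P, hPs.trans hES, hPc, hPch⟩
      · -- Q is a (b-1)-cap inside E
        have hQS : Q ⊆ S := hQE.trans hES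
        have hQne : Q.Nonempty := by rw [← card_pos]; omega
        obtain ⟨p, hpQ, hpmin⟩ := Q.exists_min_image (·.1) hQne
        obtain ⟨r, hrQ, hrp, hpr, hr2⟩ :=
          exists_second_min hQch.1 hpQ (by omega) hpmin
        have hpE := hQE hpQ
        rw [hE, mem_filter] at hpE
        obtain ⟨hpS, P, hPS, hPc, hPch, hpP, hpmax⟩ := hpE
        obtain ⟨q, hqP, hqp, hq1, hq2⟩ :=
          exists_second_max hPch.1 hpP (by omega) hpmax
        have hqS : q ∈ P := hqP
        have hne := hs q (hPS hqP) p hpS r (hQS hrQ) hq1 hpr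
        rcases lt_or_gt_of_ne hne with hlt | hgt
        · -- extend the cup P by r
          left
          have hrP : r ∉ P := fun hrP' => absurd (hpmax r hrP') (not_le.2 hpr)
          refine ⟨insert r P, ?_, ?_, ?_⟩
          · exact insert_subset (hQS hrQ) hPS
          · rw [card_insert_of_notMem hrP]; omega
          · exact chain_insert_max hPch hpP hpmax hqP hq2 hq1 hpr
              (by rw [one_mul, one_mul]; exact hlt)
        · -- extend the cap Q by q
          right
          have hqQ : q ∉ Q := fun hqQ' => absurd (hpmin q hqQ') (not_le.2 hq1)
          refine ⟨insert q Q, ?_, ?_, ?_⟩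
          · exact insert_subset (hPS hqP) hQS
          · rw [card_insert_of_notMem hqQ]; omega
          · exact chain_insert_min hQch hpQ hpmin hrQ hr2 hpr hq1
              (by rw [neg_one_mul, neg_one_mul]; exact neg_lt_neg hgt)

end ESStuff2

section ESStuff3

lemma isChain2_convexPos {ε : ℝ} {P : Finset (ℝ × ℝ)} (h : IsChain2 ε P) : ConvexPos P := by
  classical
  intro b hb
  set L := P.filter (fun x => x.1 < b.1) with hL
  set R := P.filter (fun x => b.1 < x.1) with hR
  have key : ∃ m : ℝ, (∀ a ∈ L, ε * pslope a b < m) ∧ (∀ c ∈ R, m < ε * pslope b c) := by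
    rcases L.eq_empty_or_nonempty with hLe | hLn
    · rcases R.eq_empty_or_nonempty with hRe | hRn
      · exact ⟨0, by simp [hLe], by simp [hRe]⟩
      · obtain ⟨c₀, hc₀, hc₀min⟩ := R.exists_min_image (fun c => ε * pslope b c) hRn
        exact ⟨ε * pslope b c₀ - 1, by simp [hLe],
          fun c hc => by have := hc₀min c hc; linarith⟩
    · rcases R.eq_empty_or_nonempty with hRe | hRn
      · obtain ⟨a₀, ha₀, ha₀max⟩ := L.exists_max_image (fun a => ε * pslope a b) hLn
        exact ⟨ε * pslope a₀ b + 1,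
          fun a ha => by have := ha₀max a ha; linarith, by simp [hRe]⟩
      · obtain ⟨a₀, ha₀, ha₀max⟩ := L.exists_max_image (fun a => ε * pslope a b) hLn
        obtain ⟨c₀, hc₀, hc₀min⟩ := R.exists_min_image (fun c => ε * pslope b c) hRn
        have ha₀' := mem_filter.1 ha₀
        have hc₀' := mem_filter.1 hc₀
        have hsep : ε * pslope a₀ b < ε * pslope b c₀ :=
          h.2 a₀ ha₀'.1 b hb c₀ hc₀'.1 ha₀'.2 hc₀'.2
        refine ⟨(ε * pslope a₀ b + ε * pslope b c₀) / 2, ?_, ?_⟩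
        · intro a ha; have := ha₀max a ha; linarith
        · intro c hc; have := hc₀min c hc; linarith
  obtain ⟨m, hmL, hmR⟩ := key
  set f : ℝ × ℝ → ℝ := fun x => ε * x.2 - m * x.1 with hf
  have hlin : IsLinearMap ℝ f := by
    constructor
    · intro x y; simp only [hf, Prod.fst_add, Prod.snd_add]; ring
    · intro c x
      simp only [hf, Prod.smul_fst, Prod.smul_snd, smul_eq_mul]; ring
  intro hmem
  have hsubs : ((P.erase b : Finset (ℝ × ℝ)) : Set (ℝ × ℝ)) ⊆ {x | f b < f x} := by
    intro x hx'
    simp only [coe_erase, Set.mem_diff, mem_coe, Set.mem_singleton_iff] at hx'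
    obtain ⟨hxP, hxb⟩ := hx'
    show f b < f x
    rcases lt_trichotomy x.1 b.1 with h1 | h1 | h1
    · have hmx := hmL x (by rw [hL, mem_filter]; exact ⟨hxP, h1⟩)
      have hps := pslope_mul (p := x) (q := b) (ne_of_lt h1)
      have e : ε * (b.2 - x.2) = (ε * pslope x b) * (b.1 - x.1) := by
        linear_combination (-ε) * hps
      have := mul_lt_mul_of_pos_right hmx (show (0:ℝ) < b.1 - x.1 by linarith)
      simp only [hf]; linarith
    · exact absurd h1 (h.1 x hxP b hb hxb)
    · have hmx := hmR x (by rw [hR, mem_filter]; exact ⟨hxP, h1⟩)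
      have hps := pslope_mul (p := b) (q := x) (ne_of_lt h1)
      have e : ε * (x.2 - b.2) = (ε * pslope b x) * (x.1 - b.1) := by
        linear_combination (-ε) * hps
      have := mul_lt_mul_of_pos_right hmx (show (0:ℝ) < x.1 - b.1 by linarith)
      simp only [hf]; linarith
  have := convexHull_min hsubs (convex_halfSpace_gt hlin (f b)) hmem
  simp at this

/-- The shear map `(x, y) ↦ (x + t y, y)` as a linear map. -/
def shearMap (t : ℝ) : (ℝ × ℝ) →ₗ[ℝ] (ℝ × ℝ) where
  toFun p := (p.1 + t * p.2, p.2)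
  map_add' x y := by
    refine Prod.ext ?_ ?_ <;>
      simp only [Prod.fst_add, Prod.snd_add]
    ring
  map_smul' c x := by
    refine Prod.ext ?_ ?_ <;>
      simp only [Prod.smul_fst, Prod.smul_snd, smul_eq_mul, RingHom.id_apply]
    ring

lemma shear_shear (t : ℝ) (p : ℝ × ℝ) : shearMap (-t) (shearMap t p) = p := by
  simp only [shearMap, LinearMap.coe_mk, AddHom.coe_mk]
  have : p.1 + t * p.2 + -t * p.2 = p.1 := by ring
  rw [this]

lemma shear_injective (t : ℝ) : Function.Injective (shearMap t) := by
  intro p q h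
  have := congrArg (shearMap (-t)) h
  rwa [shear_shear, shear_shear] at this

lemma collinear_linimage (f : (ℝ × ℝ) →ₗ[ℝ] (ℝ × ℝ)) {s : Set (ℝ × ℝ)}
    (h : Collinear ℝ s) : Collinear ℝ (f '' s) := by
  rcases s.eq_empty_or_nonempty with rfl | ⟨p₀, hp₀⟩
  · simp only [Set.image_empty]
    exact collinear_empty ℝ _
  · rw [collinear_iff_of_mem hp₀] at h
    obtain ⟨v, hv⟩ := h
    rw [collinear_iff_of_mem (Set.mem_image_of_mem f hp₀)]
    refine ⟨f v, ?_⟩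
    rintro _ ⟨p, hp, rfl⟩
    obtain ⟨r, hr⟩ := hv p hp
    exact ⟨r, by rw [hr]; simp [map_add, map_smul]⟩

lemma collinear_of_pslope_eq {a b c : ℝ × ℝ} (h1 : a.1 < b.1) (h2 : b.1 < c.1)
    (he : pslope a b = pslope b c) : Collinear ℝ ({a, b, c} : Set (ℝ × ℝ)) := by
  have hac : pslope a c = pslope a b := by
    have e1 := (pslope_identity h1 h2).1
    have hz : pslope b c - pslope a b = 0 := by rw [he]; ring
    rw [hz, mul_zero] at e1
    linarith
  rw [collinear_iff_of_mem (Set.mem_insert a {b, c})]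
  refine ⟨(1, pslope a b), ?_⟩
  intro p hp
  simp only [Set.mem_insert_iff, Set.mem_singleton_iff] at hp
  have hcomp : ∀ s : ℝ, s • ((1:ℝ), pslope a b) +ᵥ a = (s * 1 + a.1, s * pslope a b + a.2) := by
    intro s
    simp [Prod.smul_mk, smul_eq_mul, Prod.ext_iff]
  rcases hp with hp | hp | hp
  · refine ⟨0, ?_⟩
    rw [hp, hcomp]
    refine Prod.ext ?_ ?_
    · show a.1 = 0 * 1 + a.1; ring
    · show a.2 = 0 * pslope a b + a.2; ring
  · refine ⟨b.1 - a.1, ?_⟩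
    have hps := pslope_mul (p := a) (q := b) (ne_of_lt h1)
    rw [hp, hcomp]
    refine Prod.ext ?_ ?_
    · show b.1 = (b.1 - a.1) * 1 + a.1; ring
    · show b.2 = (b.1 - a.1) * pslope a b + a.2; linarith [hps]
  · refine ⟨c.1 - a.1, ?_⟩
    have hps := pslope_mul (p := a) (q := c) (ne_of_lt (h1.trans h2))
    rw [hac] at hps
    rw [hp, hcomp]
    refine Prod.ext ?_ ?_
    · show c.1 = (c.1 - a.1) * 1 + a.1; ring
    · show c.2 = (c.1 - a.1) * pslope a b + a.2; linarith [hps]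

end ESStuff3

section ESStuff4

lemma exists_good_shear (S : Finset (ℝ × ℝ)) :
    ∃ t : ℝ, ∀ p ∈ S, ∀ q ∈ S, p ≠ q → p.1 + t * p.2 ≠ q.1 + t * q.2 := by
  classical
  obtain ⟨t, ht⟩ := Infinite.exists_notMem_finset
    ((S ×ˢ S).image fun pq => (pq.2.1 - pq.1.1) / (pq.1.2 - pq.2.2))
  refine ⟨t, fun p hp q hq hne heq => ?_⟩
  by_cases h2 : p.2 = q.2
  · apply hne
    have h1 : p.1 = q.1 := by rw [h2] at heq; linarith
    exact Prod.ext h1 h2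
  · apply ht
    simp only [mem_image, mem_product]
    refine ⟨(p, q), ⟨hp, hq⟩, ?_⟩
    show (q.1 - p.1) / (p.2 - q.2) = t
    rw [div_eq_iff (sub_ne_zero.2 h2)]
    linarith

lemma es_convexPos {ℓ : ℕ} (hl : 2 ≤ ℓ) (S : Finset (ℝ × ℝ)) (hgp : GenPos S)
    (hcard : Nat.choose (ℓ + ℓ - 4) (ℓ - 2) < S.card) :
    ∃ P ⊆ S, P.card = ℓ ∧ ConvexPos P := by
  classical
  obtain ⟨t, ht⟩ := exists_good_shear S
  set φ := shearMap t with hφ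
  set ψ := shearMap (-t) with hψ
  have hψφ : ∀ p, ψ (φ p) = p := shear_shear t
  have hφψ : ∀ p, φ (ψ p) = p := by
    intro p
    have := shear_shear (-t) p
    rwa [neg_neg] at this
  have hφinj : Function.Injective φ := shear_injective t
  have hψinj : Function.Injective ψ := shear_injective (-t)
  set S' := S.image φ with hS'
  have hS'card : S'.card = S.card := card_image_of_injective _ hφinj
  have hφ1 : ∀ p : ℝ × ℝ, (φ p).1 = p.1 + t * p.2 := fun p => rfl
  have hx' : ∀ p ∈ S', ∀ q ∈ S', p ≠ q → p.1 ≠ q.1 := by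
    intro p' hp' q' hq' hne
    obtain ⟨p, hp, rfl⟩ := mem_image.1 hp'
    obtain ⟨q, hq, rfl⟩ := mem_image.1 hq'
    rw [hφ1, hφ1]
    exact ht p hp q hq (fun h => hne (by rw [h]))
  have hs' : ∀ x ∈ S', ∀ y ∈ S', ∀ z ∈ S',
      x.1 < y.1 → y.1 < z.1 → pslope x y ≠ pslope y z := by
    intro x hxm y hym z hzm h1 h2 heq
    have hcol : Collinear ℝ ({x, y, z} : Set (ℝ × ℝ)) := collinear_of_pslope_eq h1 h2 heq
    obtain ⟨x₀, hx₀, rfl⟩ := mem_image.1 hxm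
    obtain ⟨y₀, hy₀, rfl⟩ := mem_image.1 hym
    obtain ⟨z₀, hz₀, rfl⟩ := mem_image.1 hzm
    have hxy : x₀ ≠ y₀ := fun h => (ne_of_lt h1) (by rw [h])
    have hyz : y₀ ≠ z₀ := fun h => (ne_of_lt h2) (by rw [h])
    have hxz : x₀ ≠ z₀ := fun h => (ne_of_lt (h1.trans h2)) (by rw [h])
    have himg : ψ '' ({φ x₀, φ y₀, φ z₀} : Set (ℝ × ℝ)) = {x₀, y₀, z₀} := by
      simp [Set.image_insert_eq, hψφ]
    have hcol2 : Collinear ℝ ({x₀, y₀, z₀} : Set (ℝ × ℝ)) := by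
      rw [← himg]; exact collinear_linimage ψ hcol
    refine hgp {x₀, y₀, z₀} ?_ ?_ ?_
    · intro w hw
      simp only [mem_insert, mem_singleton] at hw
      rcases hw with rfl | rfl | rfl <;> assumption
    · rw [card_insert_of_notMem (by simp [hxy, hxz]),
        card_insert_of_notMem (by simp [hyz]), card_singleton]
    · have : (({x₀, y₀, z₀} : Finset (ℝ × ℝ)) : Set (ℝ × ℝ))
          = ({x₀, y₀, z₀} : Set (ℝ × ℝ)) := by simp
      rw [this]; exact hcol2
  have hch : (∃ P ⊆ S', P.card = ℓ ∧ IsChain2 1 P) ∨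
      (∃ P ⊆ S', P.card = ℓ ∧ IsChain2 (-1) P) :=
    cupcap (ℓ + ℓ) ℓ ℓ le_rfl hl hl S' hx' hs' (by rw [hS'card]; exact hcard)
  have main : ∀ P' : Finset (ℝ × ℝ), P' ⊆ S' → P'.card = ℓ → ConvexPos P' →
      ∃ P ⊆ S, P.card = ℓ ∧ ConvexPos P := by
    intro P' hP'S hP'c hP'cp
    set P := P'.image ψ with hP
    have hPS : P ⊆ S := by
      intro p hp
      obtain ⟨p', hp', rfl⟩ := mem_image.1 hp
      obtain ⟨s, hsS, rfl⟩ := mem_image.1 (hP'S hp')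
      rw [hψφ]; exact hsS
    have hPcard : P.card = ℓ := by rw [hP, card_image_of_injective _ hψinj, hP'c]
    refine ⟨P, hPS, hPcard, ?_⟩
    intro p hp hmem
    obtain ⟨p', hp', rfl⟩ := mem_image.1 hp
    have hφp : φ (ψ p') = p' := hφψ p'
    have himgP : φ '' (P : Set (ℝ × ℝ)) = (P' : Set (ℝ × ℝ)) := by
      rw [hP, coe_image, ← Set.image_comp]
      have : φ ∘ ψ = id := funext hφψ
      rw [this, Set.image_id]
    have hmem2 : φ (ψ p') ∈ φ '' (convexHull ℝ ((P.erase (ψ p') : Finset (ℝ × ℝ)) : Set (ℝ × ℝ))) :=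
      Set.mem_image_of_mem φ hmem
    rw [φ.image_convexHull] at hmem2
    have himgE : φ '' ((P.erase (ψ p') : Finset (ℝ × ℝ)) : Set (ℝ × ℝ))
        = ((P'.erase p' : Finset (ℝ × ℝ)) : Set (ℝ × ℝ)) := by
      rw [coe_erase, coe_erase, Set.image_diff hφinj, himgP, Set.image_singleton, hφp]
    rw [himgE, hφp] at hmem2
    exact hP'cp p' hp' hmem2
  rcases hch with ⟨P', h1, h2, h3⟩ | ⟨P', h1, h2, h3⟩ <;>
    exact main P' h1 h2 (isChain2_convexPos h3)

end ESStuff4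


/-- For `ℓ ≥ 4` and `n ≥ 4^ℓ`, `g(K^ℓ_n; q) ≤ r(K^ℓ_n; q+1)`: any `N` realizing the
`(q+1)`-color hypergraph Ramsey property also realizes the geometric
monochromatic-convex property. -/
theorem geom_le_hyper_ramsey (ℓ n q N : ℕ) (hl : 4 ≤ ℓ) (hn : 4 ^ ℓ ≤ n)
    (h : HyperRamseyProp ℓ n (q + 1) N) :
    GeomRamseyProp ℓ n q N := by
  intro V hV hgpV χ
  classical
  obtain ⟨V₀, hV₀V, hV₀card⟩ := Finset.exists_subset_card_eq hV
  set f : Fin N → ℝ × ℝ := fun i => (V₀.equivFin.symm (finCongr hV₀card.symm i) : ℝ × ℝ)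
    with hfdef
  have hfinj : Function.Injective f := by
    intro i j hij
    have h1 : V₀.equivFin.symm (finCongr hV₀card.symm i)
        = V₀.equivFin.symm (finCongr hV₀card.symm j) := Subtype.coe_injective hij
    exact (finCongr hV₀card.symm).injective (V₀.equivFin.symm.injective h1)
  have hfV : ∀ i, f i ∈ V₀ := fun i => (V₀.equivFin.symm (finCongr hV₀card.symm i)).2
  set χ' : Finset (Fin N) → Fin (q + 1) := fun s =>
    if ConvexPos (s.image f) then (χ (s.image f)).castSucc else Fin.last q with hχ'
  obtain ⟨T, hTcard, c, hc⟩ := h χ'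
  set T' := T.image f with hT'
  have hT'V : T' ⊆ V := by
    intro x hx
    obtain ⟨i, _, rfl⟩ := mem_image.1 hx
    exact hV₀V (hfV i)
  have hT'card : T'.card = n := by rw [hT', card_image_of_injective _ hfinj, hTcard]
  have hgpT' : GenPos T' := fun U hU => hgpV U (hU.trans hT'V)
  -- correspondence between subsets of T and subsets of T'
  have hcorr : ∀ e' ⊆ T', ∃ e ⊆ T, e.card = e'.card ∧ e.image f = e' := by
    intro e' he'
    have himg : (T.filter (fun i => f i ∈ e')).image f = e' := by
      apply Finset.Subset.antisymm
      · intro x hx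
        obtain ⟨i, hi, rfl⟩ := mem_image.1 hx
        exact (mem_filter.1 hi).2
      · intro x hx
        obtain ⟨i, hiT, rfl⟩ := mem_image.1 (he' hx)
        exact mem_image.2 ⟨i, mem_filter.2 ⟨hiT, hx⟩, rfl⟩
    refine ⟨T.filter (fun i => f i ∈ e'), filter_subset _ _, ?_, himg⟩
    have hcc := card_image_of_injective (T.filter (fun i => f i ∈ e')) hfinj
    rw [himg] at hcc
    exact hcc.symm
  have hln : ℓ ≤ n := le_trans (le_of_lt (Nat.lt_pow_self (by norm_num : 1 < 4))) hn
  -- the binomial bound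
  have hchoose : Nat.choose (ℓ + ℓ - 4) (ℓ - 2) < n := by
    have h1 : Nat.choose (ℓ + ℓ - 4) (ℓ - 2) ≤ 2 ^ (ℓ + ℓ - 4) := by
      have h2 : ℓ - 2 ∈ Finset.range (ℓ + ℓ - 4 + 1) := mem_range.2 (by omega)
      calc Nat.choose (ℓ + ℓ - 4) (ℓ - 2)
          ≤ ∑ i ∈ Finset.range (ℓ + ℓ - 4 + 1), Nat.choose (ℓ + ℓ - 4) i :=
            Finset.single_le_sum (fun _ _ => Nat.zero_le _) h2
        _ = 2 ^ (ℓ + ℓ - 4) := Nat.sum_range_choose _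
    have h3 : 2 ^ (ℓ + ℓ - 4) < 4 ^ ℓ := by
      have : (4:ℕ) ^ ℓ = 2 ^ (2 * ℓ) := by
        rw [show (4:ℕ) = 2 ^ 2 by norm_num, ← pow_mul]
      rw [this]
      exact Nat.pow_lt_pow_right (by norm_num) (by omega)
    omega
  -- step (a): some ℓ-subset of T' is in convex position, so c is not the extra color
  obtain ⟨P, hPT', hPcard, hPconv⟩ := es_convexPos (ℓ := ℓ) (by omega) T' hgpT'
    (by rw [hT'card]; exact hchoose)
  obtain ⟨eP, hePT, hePcard, hePimg⟩ := hcorr P hPT'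
  have hχeP := hc eP hePT (by rw [hePcard, hPcard])
  have hcne : c ≠ Fin.last q := by
    rw [← hχeP, hχ']
    simp only
    rw [hePimg, if_pos hPconv]
    exact (Fin.castSucc_lt_last _).ne
  obtain ⟨c₀, hc₀⟩ := Fin.exists_castSucc_eq.2 hcne
  -- step (b): every ℓ-subset of T' is in convex position and gets color c₀
  have hb : ∀ e' ⊆ T', e'.card = ℓ → ConvexPos e' ∧ χ e' = c₀ := by
    intro e' he' hcard'
    obtain ⟨e, heT, hecard, heimg⟩ := hcorr e' he'
    have hce := hc e heT (by rw [hecard, hcard'])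
    rw [hχ'] at hce
    simp only at hce
    rw [heimg] at hce
    by_cases hcp : ConvexPos e'
    · rw [if_pos hcp] at hce
      refine ⟨hcp, ?_⟩
      have : (χ e').castSucc = c₀.castSucc := by rw [hce, hc₀]
      exact Fin.castSucc_injective _ this
    · rw [if_neg hcp] at hce
      exact absurd (hce.trans hc₀.symm).symm (Fin.castSucc_lt_last _).ne
  -- step (c): T' itself is in convex position
  have hcpT' : ConvexPos T' := by
    intro p hp hmem
    rw [convexHull_eq_union] at hmem
    simp only [Set.mem_iUnion] at hmem
    obtain ⟨u, hus, hai, hpu⟩ := hmem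
    have hucard : u.card ≤ 3 := by
      have h1 := hai.card_le_finrank_succ
      rw [Fintype.card_coe] at h1
      have h2 : Module.finrank ℝ (vectorSpan ℝ (Set.range ((↑) : u → ℝ × ℝ)))
          ≤ Module.finrank ℝ (ℝ × ℝ) := Submodule.finrank_le _
      have h3 : Module.finrank ℝ (ℝ × ℝ) = 2 := by
        rw [Module.finrank_prod, Module.finrank_self]
      omega
    have huT : u ⊆ T'.erase p := by
      intro x hx
      exact_mod_cast hus (by exact_mod_cast hx)
    have hins : insert p u ⊆ T' := by
      intro x hx
      rcases mem_insert.1 hx with rfl | hx'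
      · exact hp
      · exact mem_of_mem_erase (huT hx')
    obtain ⟨e', hsub1, hsub2, hecard⟩ := Finset.exists_subsuperset_card_eq (n := ℓ) hins
      (by
        have := card_insert_le p u
        omega)
      (by rw [hT'card]; exact hln)
    have hconv := (hb e' hsub2 hecard).1
    refine hconv p (hsub1 (mem_insert_self p u)) ?_
    refine convexHull_mono ?_ hpu
    intro x hx
    simp only [coe_erase, Set.mem_diff, mem_coe, Set.mem_singleton_iff]
    have hxu : x ∈ u := by exact_mod_cast hx
    exact ⟨hsub1 (mem_insert_of_mem hxu), ne_of_mem_erase (huT hxu)⟩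
  exact ⟨T', hT'V, hT'card, hcpT', c₀,
    fun e' he' hcard' => (hb e' he' hcard').2⟩
end
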